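/- arXiv:2402.16675 — 4 statements merged into one kernel-verified Lean document; each statement's English description precedes it below -/
import Mathlib

section
/- Let L ≥ 1 and let s, x, y ∈ ℂ^L with s ≠ 0 and x ≠ 0. Set c = ‖x‖² + ‖y‖² − |⟪s, y⟫|²/‖s‖² (which is positive). Then sup over β ∈ ℂ and v ∈ (0, ∞) of the function (β, v) ↦ −2L·log v − (‖x‖² + ‖y − β • s‖²)/v equals −2L·log(c/(2L)) − 2L, and the supremum is attained at β = ⟪s, y⟫/‖s‖² and v = c/(2L). -/
open scoped ComplexInnerProductSpace

/-- Scalar lemma: for `v, c, n > 0`, `-n log v - c/v ≤ -n log(c/n) - n`. -/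
lemma scalar_bound (n c v : ℝ) (hn : 0 < n) (hc : 0 < c) (hv : 0 < v) :
    -n * Real.log v - c / v ≤ -n * Real.log (c / n) - n := by
  have h1 : Real.log (c / (n * v)) ≤ c / (n * v) - 1 :=
    Real.log_le_sub_one_of_pos (by positivity)
  have h2 : Real.log (c / (n * v)) = Real.log (c / n) - Real.log v := by
    rw [div_mul_eq_div_div, Real.log_div (by positivity) (ne_of_gt hv)]
  have h3 : n * (c / (n * v) - 1) = c / v - n := by
    field_simp
  nlinarith [mul_le_mul_of_nonneg_left h1 hn.le]

/-- Per-channel concentration of the null-hypothesis log-likelihood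
(eqs. (39)–(42)): with `c = ‖x‖² + ‖y‖² - |⟪s, y⟫|²/‖s‖² > 0`, the supremum over
`β ∈ ℂ` and `v ∈ (0,∞)` of `-2L·log v - (‖x‖² + ‖y - β•s‖²)/v` equals
`-2L·log(c/(2L)) - 2L`, attained at `β = ⟪s, y⟫/‖s‖²`, `v = c/(2L)`. -/
theorem stmt2 (L : ℕ) (hL : 1 ≤ L) (s x y : EuclideanSpace ℂ (Fin L))
    (hs : s ≠ 0) (hx : x ≠ 0) :
    0 < ‖x‖ ^ 2 + ‖y‖ ^ 2 - ‖⟪s, y⟫‖ ^ 2 / ‖s‖ ^ 2 ∧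
    IsGreatest
      {r : ℝ | ∃ (β : ℂ) (v : ℝ), 0 < v ∧
        r = -2 * (L : ℝ) * Real.log v - (‖x‖ ^ 2 + ‖y - β • s‖ ^ 2) / v}
      (-2 * (L : ℝ) * Real.log ((‖x‖ ^ 2 + ‖y‖ ^ 2 - ‖⟪s, y⟫‖ ^ 2 / ‖s‖ ^ 2) / (2 * L))
        - 2 * L) ∧
    -2 * (L : ℝ) * Real.log ((‖x‖ ^ 2 + ‖y‖ ^ 2 - ‖⟪s, y⟫‖ ^ 2 / ‖s‖ ^ 2) / (2 * L))
        - (‖x‖ ^ 2 + ‖y - (⟪s, y⟫ / (‖s‖ : ℂ) ^ 2) • s‖ ^ 2) /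
          ((‖x‖ ^ 2 + ‖y‖ ^ 2 - ‖⟪s, y⟫‖ ^ 2 / ‖s‖ ^ 2) / (2 * L)) =
      -2 * (L : ℝ) * Real.log ((‖x‖ ^ 2 + ‖y‖ ^ 2 - ‖⟪s, y⟫‖ ^ 2 / ‖s‖ ^ 2) / (2 * L))
        - 2 * L := by
  have hsn : (0:ℝ) < ‖s‖ := norm_pos_iff.mpr hs
  have hxn : (0:ℝ) < ‖x‖ := norm_pos_iff.mpr hx
  set β₀ : ℂ := ⟪s, y⟫ / (‖s‖ : ℂ) ^ 2 with hβ₀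
  -- orthogonality
  have horth : ⟪s, y - β₀ • s⟫ = 0 := by
    have hs2 : ((‖s‖:ℂ)) ^ 2 ≠ 0 := pow_ne_zero 2 (Complex.ofReal_ne_zero.mpr hsn.ne')
    rw [inner_sub_right, inner_smul_right, hβ₀, inner_self_eq_norm_sq_to_K]
    field_simp
    simp [div_self hs2]
  -- key1 : value at β₀
  have key1 : ‖y - β₀ • s‖ ^ 2 = ‖y‖ ^ 2 - ‖⟪s, y⟫‖ ^ 2 / ‖s‖ ^ 2 := by
    have h := norm_add_sq_eq_norm_sq_add_norm_sq_of_inner_eq_zero (β₀ • s) (y - β₀ • s)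
      (by rw [inner_smul_left, horth, mul_zero])
    have he : β₀ • s + (y - β₀ • s) = y := by abel
    rw [he] at h
    have hb : ‖β₀ • s‖ ^ 2 = ‖⟪s, y⟫‖ ^ 2 / ‖s‖ ^ 2 := by
      rw [norm_smul, mul_pow, hβ₀, norm_div, div_pow, norm_pow]
      simp only [Complex.norm_real, Real.norm_eq_abs, abs_of_nonneg hsn.le]
      field_simp
    nlinarith [h, hb]
  -- key2 : minimality
  have key2 : ∀ β : ℂ, ‖y - β₀ • s‖ ^ 2 ≤ ‖y - β • s‖ ^ 2 := by
    intro β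
    have h := norm_add_sq_eq_norm_sq_add_norm_sq_of_inner_eq_zero ((β₀ - β) • s) (y - β₀ • s)
      (by rw [inner_smul_left, horth, mul_zero])
    have he : (β₀ - β) • s + (y - β₀ • s) = y - β • s := by
      rw [sub_smul]; abel
    rw [he] at h
    nlinarith [h, norm_nonneg ((β₀ - β) • s), norm_nonneg (y - β • s), norm_nonneg (y - β₀ • s)]
  set c : ℝ := ‖x‖ ^ 2 + ‖y‖ ^ 2 - ‖⟪s, y⟫‖ ^ 2 / ‖s‖ ^ 2 with hcdef
  have hceq : c = ‖x‖ ^ 2 + ‖y - β₀ • s‖ ^ 2 := by rw [key1, hcdef]; ring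
  have hc : 0 < c := by
    have := sq_nonneg ‖y - β₀ • s‖
    rw [hceq]; nlinarith
  have hn : (0:ℝ) < 2 * L := by positivity
  have hcv : c / (c / (2 * L)) = 2 * L := by
    field_simp
  refine ⟨hc, ⟨⟨β₀, c / (2 * L), by positivity, by rw [← hceq, hcv]⟩, ?_⟩, by rw [← hceq, hcv]⟩
  rintro r ⟨β, v, hv, rfl⟩
  have hbd : ‖x‖ ^ 2 + ‖y - β₀ • s‖ ^ 2 ≤ ‖x‖ ^ 2 + ‖y - β • s‖ ^ 2 := by
    have := key2 β; linarith
  have h1 : -2 * (L : ℝ) * Real.log v - (‖x‖ ^ 2 + ‖y - β • s‖ ^ 2) / v ≤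
      -2 * (L : ℝ) * Real.log v - c / v := by
    rw [hceq]
    gcongr
  have h2 := scalar_bound (2 * L) c v hn hc hv
  calc -2 * (L : ℝ) * Real.log v - (‖x‖ ^ 2 + ‖y - β • s‖ ^ 2) / v
      ≤ -2 * (L : ℝ) * Real.log v - c / v := h1
    _ ≤ -2 * (L : ℝ) * Real.log (c / (2 * L)) - 2 * L := by
        have : -(2 * (L:ℝ)) = -2 * L := by ring
        linarith [h2]
end

section
/- Let L ≥ 1 and let s, x, y ∈ ℂ^L with s ≠ 0, and assume x is not a scalar multiple of s. Set c = (‖x‖² − |⟪s, x⟫|²/‖s‖²) + (‖y‖² − |⟪s, y⟫|²/‖s‖²) (which is positive). Then sup over α ∈ ℂ, β ∈ ℂ and v ∈ (0, ∞) of the function (α, β, v) ↦ −2L·log v − (‖x − α • s‖² + ‖y − β • s‖²)/v equals −2L·log(c/(2L)) − 2L, attained at α = ⟪s, x⟫/‖s‖², β = ⟪s, y⟫/‖s‖², v = c/(2L). -/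
open scoped ComplexInnerProductSpace

private lemma aux_expand (L : ℕ) (s x : EuclideanSpace ℂ (Fin L)) (hs : s ≠ 0) (α : ℂ) :
    ‖x - α • s‖ ^ 2 =
      (‖x‖ ^ 2 - ‖⟪s, x⟫‖ ^ 2 / ‖s‖ ^ 2) + ‖s‖ ^ 2 * ‖α - ⟪s, x⟫ / (‖s‖ : ℂ) ^ 2‖ ^ 2 := by
  have hns : (0:ℝ) < ‖s‖ := norm_pos_iff.mpr hs
  have h1 := @norm_sub_sq ℂ _ _ _ _ x (α • s)
  rw [inner_smul_right, norm_smul] at h1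
  have hxs : ⟪x, s⟫ = starRingEnd ℂ ⟪s, x⟫ := by rw [← inner_conj_symm]
  rw [hxs] at h1
  set a : ℂ := ⟪s, x⟫ with ha
  have h2 : ‖α - a / (‖s‖ : ℂ) ^ 2‖ ^ 2 =
      Complex.normSq α - 2 * (α * starRingEnd ℂ (a / (‖s‖:ℂ)^2)).re
        + Complex.normSq (a / (‖s‖:ℂ)^2) := by
    rw [Complex.sq_norm, Complex.normSq_sub]
    ring
  have h3 : (α * (starRingEnd ℂ) ((a : ℂ) / (‖s‖:ℂ)^2)).re
      = (α * starRingEnd ℂ a).re / ‖s‖^2 := by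
    have : ((‖s‖:ℂ))^2 = ((‖s‖^2 : ℝ) : ℂ) := by push_cast; ring
    rw [map_div₀, this, Complex.conj_ofReal, ← mul_div_assoc, Complex.div_ofReal_re]
  have h4 : Complex.normSq (a / (‖s‖:ℂ)^2) = Complex.normSq a / ‖s‖^4 := by
    rw [Complex.normSq_div, map_pow, Complex.normSq_ofReal]
    ring_nf
  have h5 : ‖a‖ ^ 2 = Complex.normSq a := by
    rw [Complex.sq_norm]
  have h6 : ‖α‖ ^ 2 = Complex.normSq α := by
    rw [Complex.sq_norm]
  have hre : RCLike.re (α * (starRingEnd ℂ) a) = (α * (starRingEnd ℂ) a).re := rfl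
  rw [h1, h2, h3, h4, h5, hre, mul_pow, h6]
  have hn2 : (0:ℝ) < ‖s‖ ^ 2 := by positivity
  field_simp
  ring

private lemma aux_log (M c v : ℝ) (hM : 0 < M) (hc : 0 < c) (hv : 0 < v) :
    -M * Real.log v - c / v ≤ -M * Real.log (c / M) - M := by
  have ht : 0 < c / (M * v) := by positivity
  have h := Real.log_le_sub_one_of_pos ht
  rw [Real.log_div hc.ne' (by positivity), Real.log_mul hM.ne' hv.ne'] at h
  have he : M * (c / (M * v)) = c / v := by field_simp
  rw [Real.log_div hc.ne' hM.ne']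
  nlinarith [mul_le_mul_of_nonneg_left h hM.le]

/-- Per-channel concentration of the alternative-hypothesis log-likelihood
(eqs. (45)–(48)): with `c = (‖x‖² - |⟪s, x⟫|²/‖s‖²) + (‖y‖² - |⟪s, y⟫|²/‖s‖²) > 0`
(positive since `x` is not a multiple of `s`), the supremum over `α, β ∈ ℂ` and
`v ∈ (0,∞)` of `-2L·log v - (‖x - α•s‖² + ‖y - β•s‖²)/v` equals
`-2L·log(c/(2L)) - 2L`, attained at `α = ⟪s, x⟫/‖s‖²`, `β = ⟪s, y⟫/‖s‖²`,
`v = c/(2L)`. -/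
theorem stmt3 (L : ℕ) (hL : 1 ≤ L) (s x y : EuclideanSpace ℂ (Fin L))
    (hs : s ≠ 0) (hxs : ∀ a : ℂ, x ≠ a • s) :
    0 < (‖x‖ ^ 2 - ‖⟪s, x⟫‖ ^ 2 / ‖s‖ ^ 2) + (‖y‖ ^ 2 - ‖⟪s, y⟫‖ ^ 2 / ‖s‖ ^ 2) ∧
    IsGreatest
      {r : ℝ | ∃ (α β : ℂ) (v : ℝ), 0 < v ∧
        r = -2 * (L : ℝ) * Real.log v - (‖x - α • s‖ ^ 2 + ‖y - β • s‖ ^ 2) / v}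
      (-2 * (L : ℝ) *
          Real.log (((‖x‖ ^ 2 - ‖⟪s, x⟫‖ ^ 2 / ‖s‖ ^ 2) +
            (‖y‖ ^ 2 - ‖⟪s, y⟫‖ ^ 2 / ‖s‖ ^ 2)) / (2 * L)) - 2 * L) ∧
    -2 * (L : ℝ) *
        Real.log (((‖x‖ ^ 2 - ‖⟪s, x⟫‖ ^ 2 / ‖s‖ ^ 2) +
          (‖y‖ ^ 2 - ‖⟪s, y⟫‖ ^ 2 / ‖s‖ ^ 2)) / (2 * L))
      - (‖x - (⟪s, x⟫ / (‖s‖ : ℂ) ^ 2) • s‖ ^ 2 +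
          ‖y - (⟪s, y⟫ / (‖s‖ : ℂ) ^ 2) • s‖ ^ 2) /
        (((‖x‖ ^ 2 - ‖⟪s, x⟫‖ ^ 2 / ‖s‖ ^ 2) +
          (‖y‖ ^ 2 - ‖⟪s, y⟫‖ ^ 2 / ‖s‖ ^ 2)) / (2 * L)) =
    -2 * (L : ℝ) *
        Real.log (((‖x‖ ^ 2 - ‖⟪s, x⟫‖ ^ 2 / ‖s‖ ^ 2) +
          (‖y‖ ^ 2 - ‖⟪s, y⟫‖ ^ 2 / ‖s‖ ^ 2)) / (2 * L)) - 2 * L := by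
  have hL' : (0:ℝ) < 2 * L := by positivity
  set dx : ℝ := ‖x‖ ^ 2 - ‖⟪s, x⟫‖ ^ 2 / ‖s‖ ^ 2 with hdx
  set dy : ℝ := ‖y‖ ^ 2 - ‖⟪s, y⟫‖ ^ 2 / ‖s‖ ^ 2 with hdy
  -- optimal values
  have hxopt : ‖x - (⟪s, x⟫ / (‖s‖ : ℂ) ^ 2) • s‖ ^ 2 = dx := by
    rw [aux_expand L s x hs]
    simp only [sub_self, norm_zero]
    ring
  have hyopt : ‖y - (⟪s, y⟫ / (‖s‖ : ℂ) ^ 2) • s‖ ^ 2 = dy := by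
    rw [aux_expand L s y hs]
    simp only [sub_self, norm_zero]
    ring
  have hdx0 : 0 < dx := by
    rw [← hxopt]
    have : x - (⟪s, x⟫ / (‖s‖ : ℂ) ^ 2) • s ≠ 0 := by
      intro h
      exact hxs (⟪s, x⟫ / (‖s‖ : ℂ) ^ 2) (by rw [sub_eq_zero] at h; exact h)
    exact pow_pos (norm_pos_iff.mpr this) 2
  have hdy0 : 0 ≤ dy := by rw [← hyopt]; positivity
  have hc : 0 < dx + dy := by linarith
  -- lower bounds for arbitrary α, β
  have hxlb : ∀ α : ℂ, dx ≤ ‖x - α • s‖ ^ 2 := by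
    intro α; rw [aux_expand L s x hs α]; nlinarith [norm_nonneg (α - ⟪s, x⟫ / (‖s‖:ℂ)^2),
      sq_nonneg ‖α - ⟪s, x⟫ / (‖s‖:ℂ)^2‖, sq_nonneg ‖s‖, norm_nonneg s]
  have hylb : ∀ β : ℂ, dy ≤ ‖y - β • s‖ ^ 2 := by
    intro β; rw [aux_expand L s y hs β]; nlinarith [sq_nonneg ‖β - ⟪s, y⟫ / (‖s‖:ℂ)^2‖,
      sq_nonneg ‖s‖]
  set v0 : ℝ := (dx + dy) / (2 * L) with hv0
  have hv0p : 0 < v0 := by positivity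
  have hdiv : (dx + dy) / v0 = 2 * L := by
    rw [hv0]; field_simp
  refine ⟨hc, ⟨⟨⟪s, x⟫ / (‖s‖ : ℂ) ^ 2, ⟪s, y⟫ / (‖s‖ : ℂ) ^ 2, v0, hv0p, ?_⟩, ?_⟩, ?_⟩
  · rw [hxopt, hyopt, hdiv]
  · rintro r ⟨α, β, v, hv, rfl⟩
    have hk : dx + dy ≤ ‖x - α • s‖ ^ 2 + ‖y - β • s‖ ^ 2 := by
      have := hxlb α; have := hylb β; linarith
    have h1 : -2 * (L:ℝ) * Real.log v - (‖x - α • s‖ ^ 2 + ‖y - β • s‖ ^ 2) / v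
        ≤ -2 * (L:ℝ) * Real.log v - (dx + dy) / v :=
      by gcongr
    have h2 := aux_log (2 * L) (dx + dy) v hL' hc hv
    calc -2 * (L:ℝ) * Real.log v - (‖x - α • s‖ ^ 2 + ‖y - β • s‖ ^ 2) / v
        ≤ -2 * (L:ℝ) * Real.log v - (dx + dy) / v := h1
      _ ≤ -2 * (L:ℝ) * Real.log ((dx + dy) / (2 * L)) - 2 * L := by linarith [h2]
  · rw [hxopt, hyopt, hdiv]
end

section
/- Let L ≥ 1, N ≥ 1, let s ∈ ℂ^L with s ≠ 0, let x₁,…,x_N, y₁,…,y_N ∈ ℂ^L with x_k ≠ 0 for every k, and let γ₁,…,γ_N ∈ ℂ with γ_k ≠ 0 for every k. Define Λ_RD(s; x, y) = Σ_{k=1}^{N} [ |⟪s, x_k⟫|² / (‖x_k‖² + ‖y_k‖²) ] / [ ‖s‖² − |⟪s, y_k⟫|² / (‖x_k‖² + ‖y_k‖²) ]. Then Λ_RD(s; (γ_k x_k)_k, (γ_k y_k)_k) = Λ_RD(s; (x_k)_k, (y_k)_k). -/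
open scoped ComplexInnerProductSpace

/-- Invariance of the Rao (Durbin) passive-radar statistic (Proposition 4,
eq. (29)) under the per-receiver complex scaling group 𝒢 of eq. (4), for a
fixed signal estimate `s`. -/
theorem stmt10 (L N : ℕ) (hL : 1 ≤ L) (hN : 1 ≤ N)
    (s : EuclideanSpace ℂ (Fin L)) (hs : s ≠ 0)
    (x y : Fin N → EuclideanSpace ℂ (Fin L)) (hx : ∀ k, x k ≠ 0)
    (γ : Fin N → ℂ) (hγ : ∀ k, γ k ≠ 0) :
    ∑ k, (‖⟪s, γ k • x k⟫‖ ^ 2 / (‖γ k • x k‖ ^ 2 + ‖γ k • y k‖ ^ 2)) /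
        (‖s‖ ^ 2 - ‖⟪s, γ k • y k⟫‖ ^ 2 / (‖γ k • x k‖ ^ 2 + ‖γ k • y k‖ ^ 2)) =
    ∑ k, (‖⟪s, x k⟫‖ ^ 2 / (‖x k‖ ^ 2 + ‖y k‖ ^ 2)) /
        (‖s‖ ^ 2 - ‖⟪s, y k⟫‖ ^ 2 / (‖x k‖ ^ 2 + ‖y k‖ ^ 2)) := by
  refine Finset.sum_congr rfl fun k _ => ?_
  have hg : ‖γ k‖ ^ 2 ≠ 0 := pow_ne_zero _ (norm_ne_zero_iff.mpr (hγ k))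
  rw [inner_smul_right, inner_smul_right, norm_smul, norm_smul, norm_mul, norm_mul]
  rw [mul_pow, mul_pow, mul_pow, mul_pow, ← mul_add, mul_div_mul_left _ _ hg,
    mul_div_mul_left _ _ hg]
end

section
/- Let N ≥ 1, let s ∈ ℂ^L with s ≠ 0, let α ∈ ℂ^N, and let D = diag(d₁,…,d_N) with d_k > 0 real, and suppose α ≠ 0. Then αᴴ [ ‖s‖² · D (I_N − (Dα)(Dα)ᴴ/‖Dα‖²) D ] α = 0. In particular, the usual Wald statistic of the passive-radar problem, obtained by evaluating the quadratic form (θ̂_r,1)ᴴ ([𝒥⁻¹(θ̂₁)]_rr)⁻¹ θ̂_r,1 with ([𝒥⁻¹(θ̂₁)]_rr)⁻¹ = ‖ŝ₁‖² D (I − (Dα̂)(Dα̂)ᴴ/‖Dα̂‖²) D at the ML estimate α̂, is identically zero. -/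
open scoped Matrix
/-- Proposition 2, first claim: the usual Wald quadratic form
`αᴴ [‖s‖² D (I - (Dα)(Dα)ᴴ/‖Dα‖²) D] α` is identically zero, so the usual Wald
test statistic of the passive-radar problem is null. -/
theorem stmt12 (L N : ℕ) (hN : 1 ≤ N)
    (s : EuclideanSpace ℂ (Fin L)) (hs : s ≠ 0)
    (α : Fin N → ℂ) (hα : α ≠ 0) (d : Fin N → ℝ) (hd : ∀ k, 0 < d k) :
    star α ⬝ᵥ
      ((((‖s‖ ^ 2 : ℝ) : ℂ) •
        (Matrix.diagonal (fun k => (d k : ℂ)) *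
          (1 - (((∑ k, ‖(d k : ℂ) * α k‖ ^ 2 : ℝ)) : ℂ)⁻¹ •
            Matrix.of (fun i j => ((d i : ℂ) * α i) * star ((d j : ℂ) * α j))) *
          Matrix.diagonal (fun k => (d k : ℂ)))) *ᵥ α) = 0 := by
  classical
  set v : Fin N → ℂ := fun k => (d k : ℂ) * α k with hv
  set S : ℝ := ∑ k, ‖(d k : ℂ) * α k‖ ^ 2 with hS
  have hSpos : 0 < S := by
    obtain ⟨k, hk⟩ := Function.ne_iff.mp hα
    refine Finset.sum_pos' (fun i _ => by positivity) ⟨k, Finset.mem_univ k, ?_⟩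
    have h0 : (d k : ℂ) * α k ≠ 0 := mul_ne_zero (by exact_mod_cast (hd k).ne') hk
    exact pow_pos (norm_pos_iff.mpr h0) 2
  have hSne : (S : ℂ) ≠ 0 := by exact_mod_cast hSpos.ne'
  have hvdot : star v ⬝ᵥ v = (S : ℂ) := by
    simp only [dotProduct, Pi.star_apply, hv, hS]
    push_cast
    exact Finset.sum_congr rfl fun k _ => Complex.conj_mul' _
  have hM : (Matrix.of fun i j => v i * star (v j)) *ᵥ v = (S : ℂ) • v := by
    funext i
    simp only [Matrix.mulVec, dotProduct, Matrix.of_apply, Pi.smul_apply,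
      smul_eq_mul, mul_assoc, ← Finset.mul_sum]
    rw [show (∑ j, star (v j) * v j) = star v ⬝ᵥ v from rfl, hvdot, mul_comm]
  have h1 : Matrix.diagonal (fun k => (d k : ℂ)) *ᵥ α = v := by
    funext i; simp [Matrix.mulVec_diagonal, hv]
  have h2 : ∀ x : Fin N → ℂ,
      star α ⬝ᵥ (Matrix.diagonal (fun k => (d k : ℂ)) *ᵥ x) = star v ⬝ᵥ x := by
    intro x
    simp only [dotProduct, Matrix.mulVec_diagonal, Pi.star_apply, hv,
      star_mul', Complex.star_def, Complex.conj_ofReal]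
    exact Finset.sum_congr rfl fun k _ => by ring
  rw [Matrix.smul_mulVec, dotProduct_smul, ← Matrix.mulVec_mulVec,
    ← Matrix.mulVec_mulVec, h1, h2, Matrix.sub_mulVec, Matrix.one_mulVec,
    Matrix.smul_mulVec, hM, smul_smul, inv_mul_cancel₀ hSne, one_smul,
    sub_self, dotProduct_zero, smul_zero]
end
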